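/- For any permutation σ ∈ S_n, p(σ) = 2·inv(σ) + v(σ), where p(σ) = |{(i,j) : j < σ(i) or i > σ⁻¹(j)}|, inv counts inversions and v counts versions (non-inversion pairs). -/

import Mathlib

/-- p(σ) = 2·inv(σ) + v(σ). -/
theorem stmt3 (n : ℕ) (σ : Equiv.Perm (Fin n)) :
    (Finset.univ.filter (fun p : Fin n × Fin n => p.2 < σ p.1 ∨ σ⁻¹ p.2 < p.1)).card
      = 2 * (Finset.univ.filter (fun p : Fin n × Fin n => p.1 < p.2 ∧ σ p.2 < σ p.1)).card
        + (Finset.univ.filter (fun p : Fin n × Fin n => p.1 < p.2 ∧ σ p.1 < σ p.2)).card := by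
  classical
  have h1 : (Finset.univ.filter (fun p : Fin n × Fin n => p.2 < σ p.1 ∨ σ⁻¹ p.2 < p.1)).card
      = (Finset.univ.filter (fun p : Fin n × Fin n => σ p.2 < σ p.1 ∨ p.2 < p.1)).card := by
    apply Finset.card_bij (fun p _ => (p.1, σ⁻¹ p.2))
    · intro p hp
      simp only [Finset.mem_filter, Finset.mem_univ, true_and] at hp ⊢
      simpa using hp
    · intro p hp q hq h
      simp only [Prod.mk.injEq] at h
      have := σ.symm.injective (by simpa using h.2)
      exact Prod.ext h.1 (by simpa using this)
    · intro q hq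
      refine ⟨(q.1, σ q.2), ?_, by simp⟩
      simp only [Finset.mem_filter, Finset.mem_univ, true_and] at hq ⊢
      simpa using hq
  have hsplit : (Finset.univ.filter (fun p : Fin n × Fin n => σ p.2 < σ p.1 ∨ p.2 < p.1)).card
      = (Finset.univ.filter (fun p : Fin n × Fin n => p.2 < p.1)).card
        + (Finset.univ.filter (fun p : Fin n × Fin n => p.1 < p.2 ∧ σ p.2 < σ p.1)).card := by
    rw [← Finset.card_union_of_disjoint, ← Finset.filter_or]
    · apply Finset.card_nbij id
      · intro p hp
        simp only [Finset.coe_filter, Finset.mem_coe, Set.mem_setOf_eq, Finset.mem_filter, Finset.mem_univ, true_and, id] at hp ⊢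
        rcases hp with h | h
        · rcases lt_trichotomy p.1 p.2 with h' | h' | h'
          · exact Or.inr ⟨h', h⟩
          · exact absurd h (by simp [h'])
          · exact Or.inl h'
        · exact Or.inl h
      · exact Set.injOn_id _
      · intro p hp
        simp only [Finset.coe_filter, Set.mem_setOf_eq, Finset.mem_univ, true_and] at hp
        refine ⟨p, ?_, rfl⟩
        simp only [Finset.coe_filter, Set.mem_setOf_eq, Finset.mem_univ, true_and]
        rcases hp with h | ⟨h1, h2⟩
        · exact Or.inr h
        · exact Or.inl h2
    · rw [Finset.disjoint_left]
      intro p hp hq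
      simp only [Finset.mem_filter] at hp hq
      exact absurd hp.2 (not_lt.mpr (le_of_lt hq.2.1))
  have hswap : (Finset.univ.filter (fun p : Fin n × Fin n => p.2 < p.1)).card
      = (Finset.univ.filter (fun p : Fin n × Fin n => p.1 < p.2)).card := by
    apply Finset.card_bij (fun p _ => (p.2, p.1))
    · intro p hp
      simp only [Finset.mem_filter, Finset.mem_univ, true_and] at hp ⊢
      exact hp
    · intro p hp q hq h
      simp only [Prod.mk.injEq] at h
      exact Prod.ext h.2 h.1
    · intro q hq
      simp only [Finset.mem_filter, Finset.mem_univ, true_and] at hq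
      exact ⟨(q.2, q.1), by simpa using hq, rfl⟩
  have hsplit2 : (Finset.univ.filter (fun p : Fin n × Fin n => p.1 < p.2)).card
      = (Finset.univ.filter (fun p : Fin n × Fin n => p.1 < p.2 ∧ σ p.2 < σ p.1)).card
        + (Finset.univ.filter (fun p : Fin n × Fin n => p.1 < p.2 ∧ σ p.1 < σ p.2)).card := by
    rw [← Finset.card_union_of_disjoint, ← Finset.filter_or]
    · congr 1
      apply Finset.filter_congr
      intro p _
      constructor
      · intro h
        rcases lt_trichotomy (σ p.1) (σ p.2) with h' | h' | h'
        · exact Or.inr ⟨h, h'⟩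
        · exact absurd (σ.injective h') (ne_of_lt h)
        · exact Or.inl ⟨h, h'⟩
      · rintro (⟨h, _⟩ | ⟨h, _⟩) <;> exact h
    · rw [Finset.disjoint_left]
      intro p hp hq
      simp only [Finset.mem_filter] at hp hq
      exact absurd hp.2.2 (not_lt.mpr (le_of_lt hq.2.2))
  rw [h1, hsplit, hswap, hsplit2]
  ring
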